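/- For any natural number n ≥ 3, ∑_{p | n} (log p)/√p ≪ √(log n · log log n), i.e., there is an absolute constant C with ∑_{p | n} (log p)/√p ≤ C·√(log n · log log n). -/

import Mathlib

open Finset

lemma theta_le (m : ℕ) : ∑ p ∈ (range m).filter Nat.Prime, Real.log p ≤ m * Real.log 4 := by
  rcases m with _ | k
  · simp
  · have h1 : ∑ p ∈ (range (k+1)).filter Nat.Prime, Real.log p
        = Real.log (primorial k) := by
      rw [primorial, Nat.cast_prod, Real.log_prod]
      intro p hp
      simp only [mem_filter] at hp
      exact_mod_cast hp.2.pos.ne'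
    rw [h1]
    have h2 : (primorial k : ℝ) ≤ (4:ℝ)^k := by exact_mod_cast primorial_le_4_pow k
    have h4 : (0:ℝ) ≤ Real.log 4 := Real.log_nonneg (by norm_num)
    calc Real.log (primorial k) ≤ Real.log ((4:ℝ)^k) :=
          Real.log_le_log (by exact_mod_cast primorial_pos k) h2
      _ = k * Real.log 4 := by rw [Real.log_pow]
      _ ≤ (k+1 : ℕ) * Real.log 4 := by push_cast; nlinarith

lemma sqrt2_le : Real.sqrt 2 ≤ 1.415 := by
  nlinarith [Real.sq_sqrt (show (0:ℝ) ≤ 2 by norm_num), Real.sqrt_nonneg 2]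

lemma sqrt3_le : Real.sqrt 3 ≤ 1.7321 := by
  nlinarith [Real.sq_sqrt (show (0:ℝ) ≤ 3 by norm_num), Real.sqrt_nonneg 3]

lemma log4_le : Real.log 4 ≤ 1.3862943616 := by
  have : (4:ℝ) = 2^2 := by norm_num
  rw [this, Real.log_pow]
  have := Real.log_two_lt_d9
  push_cast
  nlinarith

lemma cheb_sqrt (m : ℕ) :
    ∑ p ∈ (range m).filter Nat.Prime, Real.log p / Real.sqrt p ≤ 15 * Real.sqrt m := by
  induction m using Nat.strong_induction_on with
  | _ m ih =>
  rcases le_or_gt m 2 with hm | hm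
  · have he : (range m).filter Nat.Prime = ∅ := by
      rw [Finset.filter_eq_empty_iff]
      intro p hp
      rw [Finset.mem_range] at hp
      intro hpp
      exact absurd hpp.two_le (by omega)
    rw [he, Finset.sum_empty]
    positivity
  · set m' := (m+1)/2 with hm'def
    have hlt : m' < m := by omega
    have hle : m' ≤ m := hlt.le
    have h2m : m ≤ 2 * m' := by omega
    have h34 : 4 * m' ≤ 3 * m := by omega
    have hm'2 : 2 ≤ m' := by omega
    -- split the sum
    have hsplit : (range m).filter Nat.Prime
        = ((range m').filter Nat.Prime) ∪ ((Finset.Ico m' m).filter Nat.Prime) := by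
      rw [← Finset.filter_union, Finset.range_eq_Ico, Finset.range_eq_Ico,
        Finset.Ico_union_Ico_eq_Ico (Nat.zero_le _) hle]
    have hdisj : Disjoint ((range m').filter Nat.Prime) ((Finset.Ico m' m).filter Nat.Prime) := by
      apply Finset.disjoint_filter_filter
      rw [Finset.range_eq_Ico]
      exact Finset.Ico_disjoint_Ico_consecutive 0 m' m
    rw [hsplit, Finset.sum_union hdisj]
    set a := Real.sqrt m with ha
    set b := Real.sqrt m' with hb
    have ha2 : a^2 = m := Real.sq_sqrt (Nat.cast_nonneg m)
    have hb2 : b^2 = m' := Real.sq_sqrt (Nat.cast_nonneg m')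
    have hbpos : 0 < b := Real.sqrt_pos.mpr (by exact_mod_cast Nat.lt_of_lt_of_le two_pos hm'2)
    have hanon : 0 ≤ a := Real.sqrt_nonneg _
    have s2 : Real.sqrt 2 * Real.sqrt 2 = 2 := Real.mul_self_sqrt (by norm_num)
    have s3 : Real.sqrt 3 * Real.sqrt 3 = 3 := Real.mul_self_sqrt (by norm_num)
    have s2n : 0 ≤ Real.sqrt 2 := Real.sqrt_nonneg 2
    have s3n : 0 ≤ Real.sqrt 3 := Real.sqrt_nonneg 3
    -- a ≤ √2 * b
    have hab : a ≤ Real.sqrt 2 * b := by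
      have h1 : (m:ℝ) ≤ 2 * m' := by exact_mod_cast h2m
      have hpos : (0:ℝ) < a + Real.sqrt 2 * b := by positivity
      nlinarith [hbpos.le, ha2, hb2, s2]
    -- b ≤ √3/2 * a
    have hba : b ≤ Real.sqrt 3 / 2 * a := by
      have h1 : (4:ℝ) * m' ≤ 3 * m := by exact_mod_cast h34
      have hpos : (0:ℝ) < b + Real.sqrt 3 / 2 * a := by positivity
      nlinarith [hbpos.le, ha2, hb2, s3]
    have hlog4 : (0:ℝ) ≤ Real.log 4 := Real.log_nonneg (by norm_num)
    -- bound the tail sum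
    have htail : ∑ p ∈ (Finset.Ico m' m).filter Nat.Prime, Real.log p / Real.sqrt p
        ≤ Real.sqrt 2 * Real.log 4 * a := by
      have step1 : ∑ p ∈ (Finset.Ico m' m).filter Nat.Prime, Real.log p / Real.sqrt p
          ≤ ∑ p ∈ (Finset.Ico m' m).filter Nat.Prime, Real.log p / b := by
        apply Finset.sum_le_sum
        intro p hp
        simp only [Finset.mem_filter, Finset.mem_Ico] at hp
        apply div_le_div_of_nonneg_left (Real.log_nonneg (by exact_mod_cast hp.2.one_lt.le)) hbpos
        exact Real.sqrt_le_sqrt (by exact_mod_cast hp.1.1)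
      have step2 : ∑ p ∈ (Finset.Ico m' m).filter Nat.Prime, Real.log p
          ≤ m * Real.log 4 := by
        refine le_trans (Finset.sum_le_sum_of_subset_of_nonneg ?_ ?_) (theta_le m)
        · rw [Finset.range_eq_Ico]
          exact Finset.filter_subset_filter _ (Finset.Ico_subset_Ico (Nat.zero_le _) le_rfl)
        · intro p hp _
          simp only [Finset.mem_filter] at hp
          exact Real.log_nonneg (by exact_mod_cast hp.2.one_lt.le)
      rw [← Finset.sum_div] at step1
      refine le_trans step1 ?_
      rw [div_le_iff₀ hbpos]
      have : (m:ℝ) * Real.log 4 ≤ Real.sqrt 2 * Real.log 4 * a * b := by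
        nlinarith [mul_le_mul_of_nonneg_right hab (mul_nonneg hanon hlog4), ha2]
      linarith [step2]
    have hmain : ∑ p ∈ (range m').filter Nat.Prime, Real.log p / Real.sqrt p ≤ 15 * b :=
      ih m' hlt
    have hnum : Real.sqrt 2 * Real.log 4 + 15 * (Real.sqrt 3 / 2) ≤ 15 := by
      nlinarith [sqrt2_le, sqrt3_le, log4_le, hlog4, s2n, s3n]
    nlinarith [htail, hmain]

set_option maxHeartbeats 1000000 in
theorem sum_log_div_sqrt_p_over_prime_divisors :
    ∃ C : ℝ, 0 < C ∧ ∀ n : ℕ, 3 ≤ n →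
      ∑ p ∈ n.primeFactors, Real.log p / Real.sqrt p ≤
        C * Real.sqrt (Real.log n * Real.log (Real.log n)) := by
  have hlog3 : 1 < Real.log 3 := by
    have h := Real.exp_one_lt_d9
    calc (1:ℝ) = Real.log (Real.exp 1) := (Real.log_exp 1).symm
      _ < Real.log 3 := Real.log_lt_log (Real.exp_pos 1) (by linarith)
  set c0 := Real.log 3 * Real.log (Real.log 3) with hc0
  have hc0pos : 0 < c0 := mul_pos (by linarith) (Real.log_pos hlog3)
  set s0 := Real.sqrt c0 with hs0def
  have hs0 : 0 < s0 := Real.sqrt_pos.mpr hc0pos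
  refine ⟨23 + Real.log 15 / s0, by positivity, ?_⟩
  intro n hn
  classical
  set L := Real.log n with hLdef
  set LL := Real.log L with hLLdef
  have hnpos : (0:ℝ) < n := by exact_mod_cast (by omega : 0 < n)
  have hL3 : Real.log 3 ≤ L := Real.log_le_log (by norm_num) (by exact_mod_cast hn)
  have hLpos : 0 < L := lt_of_lt_of_le (by linarith) hL3
  have hLL3 : Real.log (Real.log 3) ≤ LL := Real.log_le_log (by linarith) hL3
  have hLLpos : 0 < LL := lt_of_lt_of_le (Real.log_pos hlog3) hLL3
  have hprod : c0 ≤ L * LL :=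
    mul_le_mul hL3 hLL3 (Real.log_pos hlog3).le hLpos.le
  set s := Real.sqrt (L * LL) with hsdef
  have hspos : 0 < s := Real.sqrt_pos.mpr (mul_pos hLpos hLLpos)
  have hs0s : s0 ≤ s := Real.sqrt_le_sqrt hprod
  have hl15 : (0:ℝ) ≤ Real.log 15 := Real.log_nonneg (by norm_num)
  have hsumlog : ∑ p ∈ n.primeFactors, Real.log p ≤ L := by
    have hdvd : (∏ p ∈ n.primeFactors, p) ≤ n :=
      Nat.le_of_dvd (by omega) (Nat.prod_primeFactors_dvd n)
    have heq : ∑ p ∈ n.primeFactors, Real.log p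
        = Real.log (∏ p ∈ n.primeFactors, (p:ℝ)) :=
      (Real.log_prod (fun p hp => by
        exact_mod_cast (Nat.prime_of_mem_primeFactors hp).pos.ne')).symm
    rw [heq, ← Nat.cast_prod]
    have hpp : 0 < ∏ p ∈ n.primeFactors, p :=
      Finset.prod_pos fun p hp => (Nat.prime_of_mem_primeFactors hp).pos
    exact Real.log_le_log (by exact_mod_cast hpp) (by exact_mod_cast hdvd)
  by_cases h16 : 16 ≤ n
  · -- large n
    have hL16 : Real.log 16 ≤ L := Real.log_le_log (by norm_num) (by exact_mod_cast h16)
    have hlog16 : Real.log 16 = 4 * Real.log 2 := by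
      rw [show (16:ℝ) = 2^4 by norm_num, Real.log_pow]; push_cast; ring
    have hLe : Real.exp 1 ≤ L := by
      have h1 := Real.exp_one_lt_d9
      have h2 := Real.log_two_gt_d9
      rw [hlog16] at hL16
      linarith
    have hLL1 : 1 ≤ LL := by
      have := Real.log_le_log (Real.exp_pos 1) hLe
      rwa [Real.log_exp] at this
    have hT1 : 1 ≤ L * LL := by nlinarith
    have hTpos : 0 < L * LL := by linarith
    have hss : s * s = L * LL := Real.mul_self_sqrt hTpos.le
    set N := Nat.floor (L * LL) + 1 with hNdef
    rw [← Finset.sum_filter_add_sum_filter_not n.primeFactors (fun p : ℕ => (p:ℝ) ≤ L * LL)]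
    have hsmall : ∑ p ∈ n.primeFactors.filter (fun p : ℕ => (p:ℝ) ≤ L * LL),
        Real.log p / Real.sqrt p ≤ 22 * s := by
      have hsub : n.primeFactors.filter (fun p : ℕ => (p:ℝ) ≤ L * LL)
          ⊆ (Finset.range N).filter Nat.Prime := by
        intro p hp
        simp only [Finset.mem_filter, Finset.mem_range] at hp ⊢
        exact ⟨Nat.lt_succ_of_le (Nat.le_floor hp.2), Nat.prime_of_mem_primeFactors hp.1⟩
      have h1 : ∑ p ∈ n.primeFactors.filter (fun p : ℕ => (p:ℝ) ≤ L * LL),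
          Real.log p / Real.sqrt p
          ≤ ∑ p ∈ (Finset.range N).filter Nat.Prime, Real.log p / Real.sqrt p := by
        refine Finset.sum_le_sum_of_subset_of_nonneg hsub ?_
        intro p hp _
        simp only [Finset.mem_filter] at hp
        exact div_nonneg (Real.log_nonneg (by exact_mod_cast hp.2.one_lt.le))
          (Real.sqrt_nonneg _)
      have h2 : (N:ℝ) ≤ 2 * (L * LL) := by
        have := Nat.floor_le hTpos.le
        rw [hNdef]
        push_cast
        linarith
      have h3 : Real.sqrt N ≤ Real.sqrt 2 * s := by
        rw [hsdef, ← Real.sqrt_mul (by norm_num : (0:ℝ) ≤ 2)]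
        exact Real.sqrt_le_sqrt h2
      calc ∑ p ∈ n.primeFactors.filter (fun p : ℕ => (p:ℝ) ≤ L * LL),
            Real.log p / Real.sqrt p
          ≤ 15 * Real.sqrt N := le_trans h1 (cheb_sqrt N)
        _ ≤ 15 * (Real.sqrt 2 * s) := by nlinarith
        _ ≤ 22 * s := by nlinarith [sqrt2_le, hspos.le]
    have hbig : ∑ p ∈ n.primeFactors.filter (fun p : ℕ => ¬ ((p:ℝ) ≤ L * LL)),
        Real.log p / Real.sqrt p ≤ s := by
      have h1 : ∑ p ∈ n.primeFactors.filter (fun p : ℕ => ¬ ((p:ℝ) ≤ L * LL)),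
          Real.log p / Real.sqrt p
          ≤ ∑ p ∈ n.primeFactors.filter (fun p : ℕ => ¬ ((p:ℝ) ≤ L * LL)),
            Real.log p / s := by
        apply Finset.sum_le_sum
        intro p hp
        simp only [Finset.mem_filter, not_le] at hp
        refine div_le_div_of_nonneg_left
          (Real.log_nonneg (by exact_mod_cast (Nat.prime_of_mem_primeFactors hp.1).one_lt.le))
          hspos (Real.sqrt_le_sqrt hp.2.le)
      rw [← Finset.sum_div] at h1
      refine le_trans h1 ?_
      rw [div_le_iff₀ hspos]
      have h2 : ∑ p ∈ n.primeFactors.filter (fun p : ℕ => ¬ ((p:ℝ) ≤ L * LL)), Real.log p ≤ L := by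
        refine le_trans (Finset.sum_le_sum_of_subset_of_nonneg
          (Finset.filter_subset _ _) ?_) hsumlog
        intro p hp _
        exact Real.log_nonneg (by exact_mod_cast (Nat.prime_of_mem_primeFactors hp).one_lt.le)
      have h3 : L ≤ s * s := by rw [hss]; nlinarith
      linarith
    have hrest : (0:ℝ) ≤ Real.log 15 / s0 * s := by positivity
    have hexpand : (23 + Real.log 15 / s0) * s = 23 * s + Real.log 15 / s0 * s := by ring
    linarith [hsmall, hbig]
  · -- small n : 3 ≤ n ≤ 15
    have hn15 : n ≤ 15 := by omega
    have hlhs : ∑ p ∈ n.primeFactors, Real.log p / Real.sqrt p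
        ≤ ∑ p ∈ n.primeFactors, Real.log p := by
      apply Finset.sum_le_sum
      intro p hp
      have hp1 : (1:ℝ) ≤ p := by
        exact_mod_cast (Nat.prime_of_mem_primeFactors hp).one_lt.le
      refine div_le_self (Real.log_nonneg hp1) ?_
      rw [show (1:ℝ) = Real.sqrt 1 from Real.sqrt_one.symm]
      exact Real.sqrt_le_sqrt hp1
    have hL15 : L ≤ Real.log 15 := Real.log_le_log hnpos (by exact_mod_cast hn15)
    have key : Real.log 15 = Real.log 15 / s0 * s0 := by field_simp
    nlinarith [mul_le_mul_of_nonneg_left hs0s (div_nonneg hl15 hs0.le), hspos.le]
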